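/- Let X_n be a Markov chain on ℝ with jumps ξ(x) (the increment from state x). Suppose there exist A > 0 and ε > 0 such that E[min(ξ(x), A)] ≥ ε for all x ∈ ℝ. Fix x ∈ ℝ, h > 0, let the chain start at X₀ ∈ (x, x+h], and set T := min{n ≥ 1 : X_n > x+h}. Then E[T] ≤ (A+h)/ε. -/

import Mathlib

open MeasureTheory ProbabilityTheory

/-- `kIter0 K n` is the `n`-fold composition `Kⁿ` of the kernel `K`
(with `K⁰` the identity kernel). -/
noncomputable def kIter0 (K : Kernel ℝ ℝ) : ℕ → Kernel ℝ ℝ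
  | 0 => Kernel.id
  | n + 1 => (kIter0 K n) ∘ₖ K

lemma kIter0_succ_left (K : Kernel ℝ ℝ) [IsSFiniteKernel K] (n : ℕ) :
    kIter0 K (n + 1) = K ∘ₖ kIter0 K n := by
  induction n with
  | zero => show Kernel.id ∘ₖ K = K ∘ₖ Kernel.id; rw [Kernel.id_comp, Kernel.comp_id]
  | succ n ih =>
    calc kIter0 K (n + 2) = (K ∘ₖ kIter0 K n) ∘ₖ K := by
          show kIter0 K (n + 1) ∘ₖ K = _; rw [ih]
      _ = K ∘ₖ (kIter0 K n ∘ₖ K) := Kernel.comp_assoc K (kIter0 K n) K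
      _ = K ∘ₖ kIter0 K (n + 1) := rfl

/-- For a Markov chain with kernel `P` on `ℝ` whose jumps `ξ(z)` satisfy
`E[min(ξ(z), A)] ≥ ε` for all `z`, started at `y ∈ (x, x+h]`, the first time
`T = min{n ≥ 1 : X_n > x+h}` satisfies `E[T] ≤ (A+h)/ε`.  Here
`E_y[T] = Σ_{n≥0} P_y{T > n}`, and `P_y{T > n} = P_y{X_1 ≤ x+h, …, X_n ≤ x+h}`
is the total mass at `y` of the `n`-th power of the kernel `P` restricted to
`(-∞, x+h]`. -/
theorem stmt10 (P : Kernel ℝ ℝ) [IsMarkovKernel P]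
    (A ε x h : ℝ) (hA : 0 < A) (hε : 0 < ε) (hh : 0 < h)
    (hdrift_int : ∀ z : ℝ, Integrable (fun y => min (y - z) A) (P z))
    (hdrift : ∀ z : ℝ, ε ≤ ∫ y, min (y - z) A ∂(P z))
    (y : ℝ) (hy : y ∈ Set.Ioc x (x + h)) :
    ∑' n : ℕ,
        (kIter0 (P.restrict (measurableSet_Iic : MeasurableSet (Set.Iic (x + h)))) n) y
          Set.univ
      ≤ ENNReal.ofReal ((A + h) / ε) := by
  set Q : Kernel ℝ ℝ :=
    P.restrict (measurableSet_Iic : MeasurableSet (Set.Iic (x + h))) with hQ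
  set c : ℝ := x + h + A with hc
  set G : ℝ → ENNReal := fun w => ENNReal.ofReal (c - w) with hG
  have hGmeas : Measurable G :=
    ENNReal.measurable_ofReal.comp (measurable_const.sub measurable_id)
  set μ : ℕ → Measure ℝ := fun n => (kIter0 Q n) y with hμ
  set L : ℕ → ENNReal := fun n => ∫⁻ w, G w ∂(μ n) with hL
  set m : ℕ → ENNReal := fun n => μ n Set.univ with hm
  -- ε ≤ A
  have hεA : ε ≤ A := by
    refine le_trans (hdrift 0) ?_
    calc ∫ w, min (w - 0) A ∂(P 0) ≤ ∫ _, A ∂(P 0) := by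
          refine integral_mono (hdrift_int 0) (integrable_const A) fun w => min_le_right _ _
      _ = A := by simp
  -- key pointwise estimate
  have key : ∀ z : ℝ, z ≤ x + h →
      (∫⁻ w, G w ∂(Q z)) + ENNReal.ofReal ε ≤ G z := by
    intro z hz
    have hAc : A ≤ c - z := by simp only [hc]; linarith
    have h1 : (∫⁻ w, G w ∂(Q z)) ≤ ∫⁻ w, ENNReal.ofReal (c - z - min (w - z) A) ∂(P z) := by
      rw [hQ, Kernel.restrict_apply]
      refine le_trans (setLIntegral_le_lintegral _ _) (lintegral_mono fun w => ?_)
      exact ENNReal.ofReal_le_ofReal (by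
        have := min_le_left (w - z) A; linarith)
    have hint : Integrable (fun w => c - z - min (w - z) A) (P z) :=
      (integrable_const (c - z)).sub (hdrift_int z)
    have h2 : ∫⁻ w, ENNReal.ofReal (c - z - min (w - z) A) ∂(P z)
        = ENNReal.ofReal (∫ w, (c - z - min (w - z) A) ∂(P z)) := by
      rw [ofReal_integral_eq_lintegral_ofReal hint]
      exact Filter.Eventually.of_forall fun w => by
        show (0 : ℝ) ≤ c - z - min (w - z) A
        have := min_le_right (w - z) A; linarith
    have h3 : ∫ w, (c - z - min (w - z) A) ∂(P z) ≤ c - z - ε := by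
      rw [integral_sub (integrable_const _) (hdrift_int z)]
      have := hdrift z
      simp only [integral_const, measure_univ, probReal_univ, smul_eq_mul, one_mul]
      linarith
    calc (∫⁻ w, G w ∂(Q z)) + ENNReal.ofReal ε
        ≤ ENNReal.ofReal (c - z - ε) + ENNReal.ofReal ε := by
          refine add_le_add_left ?_ _
          exact le_trans h1 (h2 ▸ ENNReal.ofReal_le_ofReal h3)
      _ = G z := by
          rw [← ENNReal.ofReal_add (by linarith) hε.le]
          simp only [hG]; ring_nf
  -- support of μ n
  have hsupp : ∀ n, ∀ᵐ z ∂(μ n), z ≤ x + h := by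
    intro n
    cases n with
    | zero =>
      simp only [hμ, kIter0, Kernel.id_apply]
      rw [ae_dirac_iff (by exact measurableSet_Iic)]
      exact hy.2
    | succ n =>
      rw [ae_iff]
      have hset : {z : ℝ | ¬ z ≤ x + h} = Set.Ioi (x + h) := by
        ext w; simp [not_le]
      rw [hset]
      simp only [hμ, kIter0_succ_left]
      rw [Kernel.comp_apply' _ _ _ measurableSet_Ioi]
      have hQ0 : ∀ b : ℝ, Q b (Set.Ioi (x + h)) = 0 := by
        intro b
        rw [hQ, Kernel.restrict_apply' _ _ _ measurableSet_Ioi]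
        have hemp : Set.Ioi (x + h) ∩ Set.Iic (x + h) = (∅ : Set ℝ) := by
          ext w
          simp only [Set.mem_inter_iff, Set.mem_Ioi, Set.mem_Iic, Set.mem_empty_iff_false,
            iff_false, not_and, not_le]
          exact fun hw => hw
        rw [hemp]; simp
      simp [hQ0]
  -- one-step inequality
  have step : ∀ n, L (n + 1) + ENNReal.ofReal ε * m n ≤ L n := by
    intro n
    have hL1 : L (n + 1) = ∫⁻ z, (∫⁻ w, G w ∂(Q z)) ∂(μ n) := by
      simp only [hL, hμ, kIter0_succ_left]
      rw [Kernel.lintegral_comp _ _ _ hGmeas]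
    have hm1 : ENNReal.ofReal ε * m n = ∫⁻ _, ENNReal.ofReal ε ∂(μ n) := by
      rw [lintegral_const]
    rw [hL1, hm1, ← lintegral_add_right _ measurable_const]
    refine lintegral_mono_ae ?_
    filter_upwards [hsupp n] with z hz using key z hz
  -- telescoping
  have tele : ∀ N : ℕ, (∑ n ∈ Finset.range N, ENNReal.ofReal ε * m n) + L N ≤ L 0 := by
    intro N
    induction N with
    | zero => simp
    | succ N ih =>
      rw [Finset.sum_range_succ]
      calc (∑ n ∈ Finset.range N, ENNReal.ofReal ε * m n) + ENNReal.ofReal ε * m N + L (N + 1)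
          = (∑ n ∈ Finset.range N, ENNReal.ofReal ε * m n) + (L (N + 1) + ENNReal.ofReal ε * m N) := by ring
        _ ≤ (∑ n ∈ Finset.range N, ENNReal.ofReal ε * m n) + L N := add_le_add_right (step N) _
        _ ≤ L 0 := ih
  have hL0 : L 0 ≤ ENNReal.ofReal (A + h) := by
    simp only [hL, hμ, kIter0, Kernel.id_apply]
    rw [lintegral_dirac' _ hGmeas]
    exact ENNReal.ofReal_le_ofReal (by simp only [hc]; have := hy.1; linarith)
  -- conclude
  have hmul : ENNReal.ofReal ε * (∑' n, m n) ≤ ENNReal.ofReal (A + h) := by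
    rw [← ENNReal.tsum_mul_left]
    refine ENNReal.tsum_le_of_sum_range_le fun N => ?_
    exact le_trans (le_trans le_self_add (tele N)) hL0
  have hεne : ENNReal.ofReal ε ≠ 0 := by
    simp [ENNReal.ofReal_eq_zero, not_le, hε]
  rw [ENNReal.ofReal_div_of_pos hε]
  rw [ENNReal.le_div_iff_mul_le (Or.inl hεne) (Or.inl ENNReal.ofReal_ne_top)]
  rwa [mul_comm]
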